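/- Let G₃ be the subgroup of the symmetric group on {1,…,14} generated by (3,10)(5,12)(6,13)(7,14) and (1,3,5,7,9,11,13)(2,4,6,8,10,12,14). Let a = (2,9)(4,11)(5,12)(6,13), b = (1,8)(2,9)(5,12)(7,14), and c = (3,10)(5,12)(6,13)(7,14), and let N = ⟨a,b,c⟩. Then N is a normal subgroup of G₃ whose order is a power of 2, the index of N in G₃ is 7, and the quotient G₃/N is cyclic. -/

import Mathlib

set_option maxRecDepth 40000

/-- `G₃`, the subgroup of the symmetric group on `{1,…,14}` generated by
`(3,10)(5,12)(6,13)(7,14)` and `(1,3,5,7,9,11,13)(2,4,6,8,10,12,14)`. -/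
def G₃ : Subgroup (Equiv.Perm (Fin 14)) :=
  Subgroup.closure {c[3,10] * c[5,12] * c[6,13] * c[7,14],
    c[1,3,5,7,9,11,13] * c[2,4,6,8,10,12,14]}

/-- `a = (2,9)(4,11)(5,12)(6,13)`. -/
def a : Equiv.Perm (Fin 14) := c[2,9] * c[4,11] * c[5,12] * c[6,13]

/-- `b = (1,8)(2,9)(5,12)(7,14)`. -/
def b : Equiv.Perm (Fin 14) := c[1,8] * c[2,9] * c[5,12] * c[7,14]

/-- `c = (3,10)(5,12)(6,13)(7,14)`. -/
def c : Equiv.Perm (Fin 14) := c[3,10] * c[5,12] * c[6,13] * c[7,14]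

/-- `N = ⟨a, b, c⟩`, viewed as a subgroup of `G₃`. -/
def N : Subgroup G₃ := (Subgroup.closure {a, b, c}).subgroupOf G₃

namespace G3Aux

/-- The order-7 generator. -/
def s : Equiv.Perm (Fin 14) := c[1,3,5,7,9,11,13] * c[2,4,6,8,10,12,14]

lemma e1 : s * a * s⁻¹ = a * b := by decide
lemma e2 : s * b * s⁻¹ = a * c := by decide
lemma e3 : s * c * s⁻¹ = b := by decide
lemma e4 : s⁻¹ * a * s = a * c := by decide
lemma e5 : s⁻¹ * b * s = c := by decide
lemma e6 : s⁻¹ * c * s = a * b * c := by decide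
lemma cab : a * b = b * a := by decide
lemma cac : a * c = c * a := by decide
lemma cbc : b * c = c * b := by decide
lemma ia : a * a = 1 := by decide
lemma ib : b * b = 1 := by decide
lemma ic : c * c = 1 := by decide
lemma s7 : s ^ 7 = 1 := by decide
lemma s2 : s * s ≠ 1 := by decide

/-- The ambient copy of `N` inside the full symmetric group. -/
abbrev H : Subgroup (Equiv.Perm (Fin 14)) := Subgroup.closure {a, b, c}

lemma haH : a ∈ H := Subgroup.subset_closure (by simp)
lemma hbH : b ∈ H := Subgroup.subset_closure (by simp)
lemma hcH : c ∈ H := Subgroup.subset_closure (by simp)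

lemma hG₃ : G₃ = Subgroup.closure {c, s} := rfl

lemma hcG : c ∈ G₃ := Subgroup.subset_closure (Set.mem_insert _ _)
lemma hsG : s ∈ G₃ := Subgroup.subset_closure (Set.mem_insert_of_mem _ rfl)

lemma hbG : b ∈ G₃ := by
  rw [← e3]
  exact mul_mem (mul_mem hsG hcG) (inv_mem hsG)

lemma haG : a ∈ G₃ := by
  have h : a = s * b * s⁻¹ * c := by rw [e2, mul_assoc, ic, mul_one]
  rw [h]
  exact mul_mem (mul_mem (mul_mem hsG hbG) (inv_mem hsG)) hcG

lemma hHG : H ≤ G₃ := by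
  apply Subgroup.closure_le _ |>.mpr
  rintro x hx
  simp only [Set.mem_insert_iff, Set.mem_singleton_iff] at hx
  rcases hx with rfl | rfl | rfl
  exacts [haG, hbG, hcG]

lemma fwd : ∀ h ∈ H, s * h * s⁻¹ ∈ H := by
  intro h hh
  induction hh using Subgroup.closure_induction with
  | mem x hx =>
    simp only [Set.mem_insert_iff, Set.mem_singleton_iff] at hx
    rcases hx with rfl | rfl | rfl
    · rw [e1]; exact mul_mem haH hbH
    · rw [e2]; exact mul_mem haH hcH
    · rw [e3]; exact hbH
  | one => simpa using one_mem H
  | mul x y hx hy px py =>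
    have h : s * (x * y) * s⁻¹ = (s * x * s⁻¹) * (s * y * s⁻¹) := by group
    rw [h]; exact mul_mem px py
  | inv x hx px =>
    have h : s * x⁻¹ * s⁻¹ = (s * x * s⁻¹)⁻¹ := by group
    rw [h]; exact inv_mem px

lemma bwd : ∀ h ∈ H, s⁻¹ * h * s ∈ H := by
  intro h hh
  induction hh using Subgroup.closure_induction with
  | mem x hx =>
    simp only [Set.mem_insert_iff, Set.mem_singleton_iff] at hx
    rcases hx with rfl | rfl | rfl
    · rw [e4]; exact mul_mem haH hcH
    · rw [e5]; exact hcH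
    · rw [e6]; exact mul_mem (mul_mem haH hbH) hcH
  | one => simpa using one_mem H
  | mul x y hx hy px py =>
    have h : s⁻¹ * (x * y) * s = (s⁻¹ * x * s) * (s⁻¹ * y * s) := by group
    rw [h]; exact mul_mem px py
  | inv x hx px =>
    have h : s⁻¹ * x⁻¹ * s = (s⁻¹ * x * s)⁻¹ := by group
    rw [h]; exact inv_mem px

lemma snorm : s ∈ Subgroup.normalizer (H : Set (Equiv.Perm (Fin 14))) := by
  rw [Subgroup.mem_normalizer_iff]
  intro h
  constructor
  · exact fwd h
  · intro hk
    have h2 := bwd _ hk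
    rwa [show s⁻¹ * (s * h * s⁻¹) * s = h from by group] at h2

lemma hGnorm : G₃ ≤ Subgroup.normalizer (H : Set (Equiv.Perm (Fin 14))) := by
  rw [hG₃]
  apply Subgroup.closure_le _ |>.mpr
  rintro x hx
  simp only [Set.mem_insert_iff, Set.mem_singleton_iff] at hx
  rcases hx with rfl | rfl
  · exact H.le_normalizer hcH
  · exact snorm

lemma hNnormal : N.Normal := by
  constructor
  intro n hn g
  have hn' : (n : Equiv.Perm (Fin 14)) ∈ H := hn
  exact (Subgroup.mem_normalizer_iff.mp (hGnorm g.2) (n : Equiv.Perm (Fin 14))).mp hn'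

lemma hsub : H ≤ Subgroup.centralizer {a, b, c} := by
  apply Subgroup.closure_le _ |>.mpr
  rintro g hg
  rw [SetLike.mem_coe, Subgroup.mem_centralizer_iff]
  intro z hz
  simp only [Set.mem_insert_iff, Set.mem_singleton_iff] at hg hz
  rcases hg with rfl | rfl | rfl <;> rcases hz with rfl | rfl | rfl <;>
    simp [cab, cac, cbc]

lemma comm : ∀ x ∈ H, ∀ y ∈ H, x * y = y * x := by
  intro x hx
  have h2 : H ≤ Subgroup.centralizer {x} := by
    apply Subgroup.closure_le _ |>.mpr
    intro g hg
    rw [SetLike.mem_coe, Subgroup.mem_centralizer_iff]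
    rintro z rfl
    exact (Subgroup.mem_centralizer_iff.mp (hsub hx) g hg).symm
  intro y hy
  exact Subgroup.mem_centralizer_iff.mp (h2 hy) x rfl

lemma sq : ∀ x ∈ H, x * x = 1 := by
  intro x hx
  induction hx using Subgroup.closure_induction with
  | mem x hx =>
    simp only [Set.mem_insert_iff, Set.mem_singleton_iff] at hx
    rcases hx with rfl | rfl | rfl
    exacts [ia, ib, ic]
  | one => simp
  | mul x y hx hy px py =>
    calc x * y * (x * y) = x * (y * x) * y := by group
    _ = x * (x * y) * y := by rw [comm y hy x hx]
    _ = (x * x) * (y * y) := by group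
    _ = 1 := by rw [px, py, one_mul]
  | inv x hx px =>
    have h : x⁻¹ * x⁻¹ = (x * x)⁻¹ := by group
    rw [h, px, inv_one]

lemma card_pow : ∃ m : ℕ, Nat.card N = 2 ^ m := by
  haveI : Fact (Nat.Prime 2) := ⟨Nat.prime_two⟩
  apply IsPGroup.exists_card_eq
  intro g
  refine ⟨1, ?_⟩
  have hg : ((g : G₃) : Equiv.Perm (Fin 14)) ∈ H := g.2
  have h2 : ((g : G₃) : Equiv.Perm (Fin 14)) * ((g : G₃) : Equiv.Perm (Fin 14)) = 1 :=
    sq _ hg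
  refine Subtype.ext (Subtype.ext ?_)
  push_cast [pow_succ, pow_one, pow_two]
  simpa using h2

/-- `s` as an element of `G₃`. -/
def sG : G₃ := ⟨s, hsG⟩

lemma gen : ∀ q : G₃ ⧸ (letI := hNnormal; N),
    letI := hNnormal
    q ∈ Subgroup.zpowers ((QuotientGroup.mk' N) sG) := by
  letI := hNnormal
  intro q
  obtain ⟨x, rfl⟩ := QuotientGroup.mk'_surjective N q
  obtain ⟨x, hx⟩ := x
  induction hx using Subgroup.closure_induction with
  | mem y hy =>
    simp only [Set.mem_insert_iff, Set.mem_singleton_iff] at hy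
    rcases hy with rfl | rfl
    · show (QuotientGroup.mk' N) ⟨c, hcG⟩ ∈ Subgroup.zpowers ((QuotientGroup.mk' N) sG)
      have h1 : (QuotientGroup.mk' N) ⟨c, hcG⟩ = 1 :=
        (QuotientGroup.eq_one_iff _).mpr (Subgroup.mem_subgroupOf.mpr hcH)
      rw [h1]
      exact one_mem _
    · exact Subgroup.mem_zpowers _
  | one =>
    rw [show (⟨1, _⟩ : G₃) = 1 from rfl, map_one]
    exact one_mem _
  | mul x y hx hy px py =>
    rw [show (⟨x * y, _⟩ : G₃) = ⟨x, hx⟩ * ⟨y, hy⟩ from rfl, map_mul]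
    exact mul_mem px py
  | inv x hx px =>
    rw [show (⟨x⁻¹, _⟩ : G₃) = (⟨x, hx⟩ : G₃)⁻¹ from rfl, map_inv]
    exact inv_mem px

lemma index7 : N.index = 7 := by
  letI := hNnormal
  haveI : Fact (Nat.Prime 7) := ⟨by norm_num⟩
  rw [Subgroup.index_eq_card]
  have h1 : Subgroup.zpowers ((QuotientGroup.mk' N) sG) = ⊤ :=
    eq_top_iff.mpr fun q _ => gen q
  have hs7 : sG ^ 7 = 1 := Subtype.ext (by push_cast; exact s7)
  have h2 : orderOf ((QuotientGroup.mk' N) sG) = 7 := by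
    apply orderOf_eq_prime
    · rw [← map_pow, hs7, map_one]
    · intro hcon
      have h3 := (QuotientGroup.eq_one_iff _).mp hcon
      have h4 : s ∈ H := h3
      exact s2 (sq s h4)
  rw [← Subgroup.card_top, ← h1, Nat.card_zpowers, h2]

end G3Aux

/-- `N = ⟨a,b,c⟩` is a normal subgroup of `G₃` of `2`-power order,
of index `7` in `G₃`, and the quotient `G₃ / N` is cyclic. -/
theorem G₃_has_normal_two_subgroup_with_cyclic_quotient :
    ∃ hN : N.Normal, (∃ m : ℕ, Nat.card N = 2 ^ m) ∧ N.index = 7 ∧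
      (letI := hN; IsCyclic (G₃ ⧸ N)) := by
  refine ⟨G3Aux.hNnormal, G3Aux.card_pow, G3Aux.index7, ?_⟩
  letI := G3Aux.hNnormal
  exact ⟨⟨_, G3Aux.gen⟩⟩
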